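/- For any integer p ≥ 2 and any r > 0, the correction coefficients h_{j,p}(S) = Σ_{l=1}^p ∫_{t_{l-1}}^{t_l} φ_j(t_l)(S(t) − S(t_l)) dt of any function S in the Sobolev ball W²_r satisfy Σ_{j=1}^p h_{j,p}² ≤ 3 r p⁻². -/

import Mathlib

open MeasureTheory intervalIntegral

/-- The trigonometric basis on `[0,1]`. -/
noncomputable def trigBasis (j : ℕ) (x : ℝ) : ℝ :=
  if j = 1 then 1
  else if j % 2 = 0 then Real.sqrt 2 * Real.cos (2 * Real.pi * ((j / 2 : ℕ) : ℝ) * x)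
  else Real.sqrt 2 * Real.sin (2 * Real.pi * ((j / 2 : ℕ) : ℝ) * x)

lemma cs_int (f : ℝ → ℝ) (hf : Continuous f) (a b : ℝ) (hab : a ≤ b) :
    (∫ t in a..b, f t) ^ 2 ≤ (b - a) * ∫ t in a..b, (f t) ^ 2 := by
  have hfi : ∀ u v : ℝ, IntervalIntegrable f volume u v := fun u v => hf.intervalIntegrable u v
  have hf2 : Continuous fun t => (f t) ^ 2 := by continuity
  have hf2i : ∀ u v : ℝ, IntervalIntegrable (fun t => (f t) ^ 2) volume u v :=
    fun u v => hf2.intervalIntegrable u v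
  set G : ℝ → ℝ := fun x => ∫ t in a..x, f t with hGdef
  set H : ℝ → ℝ := fun x => ∫ t in a..x, (f t) ^ 2 with hHdef
  have hG : ∀ x, HasDerivAt G (f x) x := fun x =>
    integral_hasDerivAt_right (hfi a x) (hf.stronglyMeasurableAtFilter _ _) hf.continuousAt
  have hH : ∀ x, HasDerivAt H ((f x) ^ 2) x := fun x =>
    integral_hasDerivAt_right (hf2i a x) (hf2.stronglyMeasurableAtFilter _ _) hf2.continuousAt
  set Φ : ℝ → ℝ := fun x => (x - a) * H x - (G x) ^ 2 with hΦdef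
  have hΦ : ∀ x, HasDerivAt Φ (H x + (x - a) * (f x) ^ 2 - 2 * G x * f x) x := by
    intro x
    have h1 : HasDerivAt (fun x => (x - a) * H x) (1 * H x + (x - a) * (f x) ^ 2) x :=
      ((hasDerivAt_id x).sub_const a).mul (hH x)
    have h2 : HasDerivAt (fun x => (G x) ^ 2) (2 * G x * f x) x := by
      have := (hG x).fun_pow 2
      simpa [mul_comm, mul_assoc] using this
    simpa [one_mul] using h1.fun_sub h2
  have hΦnonneg : ∀ x, a ≤ x → 0 ≤ H x + (x - a) * (f x) ^ 2 - 2 * G x * f x := by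
    intro x hax
    have key : ∫ t in a..x, (f t - f x) ^ 2 = H x + (x - a) * (f x) ^ 2 - 2 * G x * f x := by
      have : ∀ t : ℝ, (f t - f x) ^ 2 = (f t) ^ 2 - (2 * f x) * f t + (f x) ^ 2 := by
        intro t; ring
      simp_rw [this]
      rw [intervalIntegral.integral_add (((hf2i a x).sub ((hfi a x).const_mul _)))
        (intervalIntegrable_const), intervalIntegral.integral_sub (hf2i a x)
        ((hfi a x).const_mul _), intervalIntegral.integral_const_mul,
        intervalIntegral.integral_const]
      simp only [smul_eq_mul, hGdef, hHdef]
      ring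
    rw [← key]
    exact intervalIntegral.integral_nonneg hax (fun u _ => sq_nonneg _)
  have hΦdiff : Differentiable ℝ Φ := fun x => (hΦ x).differentiableAt
  have hmono : MonotoneOn Φ (Set.Ici a) := by
    apply monotoneOn_of_deriv_nonneg (convex_Ici a) hΦdiff.continuous.continuousOn
      hΦdiff.differentiableOn
    intro x hx
    rw [interior_Ici] at hx
    rw [(hΦ x).deriv]
    exact hΦnonneg x (le_of_lt hx)
  have h0 : Φ a = 0 := by simp [hΦdef, hGdef, hHdef]
  have hb := hmono (Set.self_mem_Ici) (Set.mem_Ici.mpr hab) hab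
  rw [h0] at hb
  have hb' : 0 ≤ (b - a) * H b - (G b) ^ 2 := by simpa [hΦdef] using hb
  have : (G b) ^ 2 ≤ (b - a) * H b := by linarith
  simpa [hGdef, hHdef] using this

lemma cos_sum_zero (p : ℕ) (hp : 0 < p) (D : ℤ) (hD : ¬ ((p:ℤ) ∣ D)) :
    ∑ k ∈ Finset.range p, Real.cos ((k : ℝ) * (2 * Real.pi * D / p)) = 0 := by
  set θ : ℝ := 2 * Real.pi * D / p with hθ
  have hp0 : (p : ℝ) ≠ 0 := Nat.cast_ne_zero.mpr hp.ne'
  have hpC : (p : ℂ) ≠ 0 := Nat.cast_ne_zero.mpr hp.ne'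
  have h2pi : (2 * Real.pi) ≠ 0 := by positivity
  set z : ℂ := Complex.exp (θ * Complex.I) with hz
  have hz1 : z ≠ 1 := by
    intro h
    rw [hz, Complex.exp_eq_one_iff] at h
    obtain ⟨n, hn⟩ := h
    have h2 : (θ : ℂ) * Complex.I = ((n : ℝ) * (2 * Real.pi) : ℝ) * Complex.I := by
      rw [hn]; push_cast; ring
    have hθn : θ = n * (2 * Real.pi) := by
      exact_mod_cast mul_right_cancel₀ Complex.I_ne_zero h2
    have h3 : (2 * Real.pi) * ((D : ℝ) / p) = (2 * Real.pi) * n := by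
      rw [hθ] at hθn; linear_combination hθn
    have h4 : (D : ℝ) / p = n := mul_left_cancel₀ h2pi h3
    apply hD
    refine ⟨n, ?_⟩
    have h5 : (D : ℝ) = p * n := by field_simp at h4; linarith
    exact_mod_cast h5
  have hre : ∀ k : ℕ, Real.cos ((k : ℝ) * θ) = (z ^ k).re := by
    intro k
    rw [hz, ← Complex.exp_nat_mul]
    rw [show (k : ℂ) * (↑θ * Complex.I) = ((k * θ : ℝ) : ℂ) * Complex.I by push_cast; ring]
    rw [Complex.exp_ofReal_mul_I_re]
  simp_rw [hre]
  rw [← Complex.re_sum]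
  have hgeom : ∑ k ∈ Finset.range p, z ^ k = (z ^ p - 1) / (z - 1) := geom_sum_eq hz1 p
  have hzp : z ^ p = 1 := by
    rw [hz, ← Complex.exp_nat_mul]
    rw [show (p : ℂ) * (↑θ * Complex.I) = (D : ℤ) * (2 * Real.pi * Complex.I) by
      rw [hθ]; push_cast; field_simp]
    exact Complex.exp_int_mul_two_pi_mul_I D
  rw [hgeom, hzp, sub_self, zero_div]
  simp

lemma sum_range_add' (f : ℕ → ℝ) (m n : ℕ) :
    ∑ k ∈ Finset.range (m + n), f k
      = (∑ k ∈ Finset.range m, f k) + ∑ k ∈ Finset.range n, f (m + k) := by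
  induction n with
  | zero => simp
  | succ n ih =>
      rw [show m + (n + 1) = (m + n) + 1 by ring, Finset.sum_range_succ, ih,
        Finset.sum_range_succ]
      ring

lemma sum_Icc_one_eq_range (f : ℕ → ℝ) (p : ℕ) :
    ∑ l ∈ Finset.Icc 1 p, f l = ∑ k ∈ Finset.range p, f (k + 1) := by
  induction p with
  | zero => simp
  | succ p ih =>
      rw [Finset.sum_Icc_succ_top (by omega), ih, Finset.sum_range_succ]

lemma sum_Icc_two_split (g : ℕ → ℝ) (p : ℕ) :
    ∑ j ∈ Finset.Icc 2 p, g j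
      = (∑ k ∈ Finset.range (p / 2), g (2 * k + 2))
        + ∑ k ∈ Finset.range ((p - 1) / 2), g (2 * k + 3) := by
  induction p with
  | zero => simp
  | succ p ih =>
      rcases Nat.lt_or_ge p 1 with hp | hp
      · interval_cases p <;> simp
      rw [Finset.sum_Icc_succ_top (by omega), ih]
      rcases Nat.even_or_odd p with ⟨q, hq⟩ | ⟨q, hq⟩
      · -- p even, p = 2s+2
        obtain ⟨s, rfl⟩ : ∃ s, q = s + 1 := ⟨q - 1, by omega⟩
        subst hq
        rw [show (s + 1 + (s + 1) + 1) / 2 = s + 1 from by omega,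
          show (s + 1 + (s + 1)) / 2 = s + 1 from by omega,
          show (s + 1 + (s + 1) + 1 - 1) / 2 = s + 1 from by omega,
          show (s + 1 + (s + 1) - 1) / 2 = s from by omega,
          Finset.sum_range_succ (fun k => g (2 * k + 3)) s]
        rw [show 2 * s + 3 = s + 1 + (s + 1) + 1 from by omega]
        ring
      · -- p odd, p = 2q+1
        subst hq
        rw [show (2 * q + 1 + 1) / 2 = q + 1 from by omega,
          show (2 * q + 1) / 2 = q from by omega,
          show (2 * q + 1 + 1 - 1) / 2 = q from by omega,
          show (2 * q + 1 - 1) / 2 = q from by omega,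
          Finset.sum_range_succ (fun k => g (2 * k + 2)) q]
        rw [show 2 * q + 2 = 2 * q + 1 + 1 from by omega]
        ring
lemma trigBasis_one (x : ℝ) : trigBasis 1 x = 1 := by simp [trigBasis]

lemma trigBasis_even (k : ℕ) (x : ℝ) :
    trigBasis (2 * k + 2) x = Real.sqrt 2 * Real.cos (2 * Real.pi * ((k : ℝ) + 1) * x) := by
  have h1 : (2 * k + 2) % 2 = 0 := by omega
  have h2 : (2 * k + 2) / 2 = k + 1 := by omega
  simp only [trigBasis, h1, h2, if_true, show 2 * k + 2 ≠ 1 from by omega, if_false]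
  push_cast; ring_nf

lemma trigBasis_odd (k : ℕ) (x : ℝ) :
    trigBasis (2 * k + 3) x = Real.sqrt 2 * Real.sin (2 * Real.pi * ((k : ℝ) + 1) * x) := by
  have h1 : (2 * k + 3) % 2 = 1 := by omega
  have h2 : (2 * k + 3) / 2 = k + 1 := by omega
  simp only [trigBasis, h1, h2, show 2 * k + 3 ≠ 1 from by omega, if_false]
  norm_num







lemma orth (p l m : ℕ) (hp : 2 ≤ p) (hl1 : 1 ≤ l) (hlp : l ≤ p) (hm1 : 1 ≤ m) (hmp : m ≤ p) :
    ∑ j ∈ Finset.Icc 1 p, trigBasis j ((l : ℝ) / p) * trigBasis j ((m : ℝ) / p)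
      = (if l = m then (p : ℝ) else 0)
        + (if p % 2 = 0 then (-1 : ℝ) ^ l * (-1 : ℝ) ^ m else 0) := by
  have hp0 : (p : ℝ) ≠ 0 := Nat.cast_ne_zero.mpr (by omega)
  obtain ⟨θ, hθ⟩ : ∃ t : ℝ, t = 2 * Real.pi * ((l : ℝ) - m) / p := ⟨_, rfl⟩
  obtain ⟨f, hfk⟩ : ∃ F : ℕ → ℝ, ∀ k : ℕ, F k = Real.cos ((k : ℝ) * θ) :=
    ⟨fun k => Real.cos ((k : ℝ) * θ), fun _ => rfl⟩
  obtain ⟨g, hgj⟩ : ∃ G : ℕ → ℝ, ∀ j : ℕ,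
      G j = trigBasis j ((l : ℝ) / p) * trigBasis j ((m : ℝ) / p) :=
    ⟨fun j => trigBasis j ((l : ℝ) / p) * trigBasis j ((m : ℝ) / p), fun _ => rfl⟩
  have h2 : Real.sqrt 2 * Real.sqrt 2 = 2 := Real.mul_self_sqrt (by norm_num)
  have hgoal : ∑ j ∈ Finset.Icc 1 p, trigBasis j ((l : ℝ) / p) * trigBasis j ((m : ℝ) / p)
      = ∑ j ∈ Finset.Icc 1 p, g j := Finset.sum_congr rfl (fun j _ => (hgj j).symm)
  rw [hgoal]
  -- pair combination
  have hpair : ∀ k : ℕ, g (2 * k + 2) + g (2 * k + 3) = 2 * f (k + 1) := by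
    intro k
    rw [hgj, hgj, hfk]
    simp only [trigBasis_even, trigBasis_odd]
    have harg : ((k + 1 : ℕ) : ℝ) * θ
        = 2 * Real.pi * ((k : ℝ) + 1) * ((l : ℝ) / p)
          - 2 * Real.pi * ((k : ℝ) + 1) * ((m : ℝ) / p) := by
      rw [hθ]; push_cast; field_simp
    rw [harg, Real.cos_sub]
    linear_combination (Real.cos (2 * Real.pi * ((k : ℝ) + 1) * ((l : ℝ) / p)) *
      Real.cos (2 * Real.pi * ((k : ℝ) + 1) * ((m : ℝ) / p)) +
      Real.sin (2 * Real.pi * ((k : ℝ) + 1) * ((l : ℝ) / p)) *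
      Real.sin (2 * Real.pi * ((k : ℝ) + 1) * ((m : ℝ) / p))) * h2
  -- reflection
  have hrefl : ∀ j : ℕ, j ≤ p → f (p - j) = f j := by
    intro j hj
    rw [hfk, hfk]
    have hcast : ((p - j : ℕ) : ℝ) = (p : ℝ) - j := by rw [Nat.cast_sub hj]
    have harg : ((p : ℝ) - j) * θ
        = (((l : ℤ) - m : ℤ) : ℝ) * (2 * Real.pi) - (j : ℝ) * θ := by
      rw [hθ]; push_cast; field_simp
    rw [hcast, harg]
    exact Real.cos_int_mul_two_pi_sub _ _
  -- full cosine sum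
  have hF : ∑ k ∈ Finset.range p, f k = if l = m then (p : ℝ) else 0 := by
    by_cases hlm : l = m
    · subst hlm
      rw [if_pos rfl]
      have : ∀ k ∈ Finset.range p, f k = 1 := by
        intro k _
        rw [hfk, hθ]
        simp
      rw [Finset.sum_congr rfl this]
      simp
    · rw [if_neg hlm]
      have hD : ¬ ((p : ℤ) ∣ ((l : ℤ) - m)) := by
        intro hdvd
        have h0 : ((l : ℤ) - m).natAbs < (p : ℤ).natAbs := by omega
        have := Int.eq_zero_of_dvd_of_natAbs_lt_natAbs hdvd h0
        omega
      have hcz := cos_sum_zero p (by omega) ((l : ℤ) - m) hD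
      rw [← hcz]
      apply Finset.sum_congr rfl
      intro k _
      rw [hfk, hθ]
      push_cast
      ring_nf
  -- f 0 = 1
  have hf0 : f 0 = 1 := by rw [hfk]; simp
  -- split the sum over Icc 1 p
  have hsplit1 : Finset.Icc 1 p = insert 1 (Finset.Icc 2 p) := by
    ext x; simp only [Finset.mem_Icc, Finset.mem_insert]; omega
  rw [hsplit1, Finset.sum_insert (by simp), sum_Icc_two_split]
  have hg1 : g 1 = 1 := by rw [hgj]; simp [trigBasis_one]
  -- reflected-shift sum identity
  have hshift : ∀ a : ℕ, a + a + 1 = p ∨ a + a = p →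
      ∑ k ∈ Finset.range a, f (p - a + k) = ∑ k ∈ Finset.range a, f (k + 1) := by
    intro a ha
    rw [← Finset.sum_range_reflect (fun k => f (p - a + k)) a]
    apply Finset.sum_congr rfl
    intro k hk
    have hk' : k < a := Finset.mem_range.mp hk
    have harg : p - a + (a - 1 - k) = p - (k + 1) := by omega
    rw [harg, hrefl (k + 1) (by omega)]
  rcases Nat.even_or_odd p with ⟨q, hq⟩ | ⟨q, hq⟩
  · -- p even, p = 2s + 2
    obtain ⟨s, rfl⟩ : ∃ s, q = s + 1 := ⟨q - 1, by omega⟩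
    have hq2 : p = 2 * s + 2 := by omega
    subst hq2
    rw [if_pos (by omega : (2 * s + 2) % 2 = 0)]
    rw [show (2 * s + 2) / 2 = s + 1 from by omega,
      show (2 * s + 2 - 1) / 2 = s from by omega]
    -- last even term
    have hlast : g (2 * s + 2) = 2 * ((-1 : ℝ) ^ l * (-1 : ℝ) ^ m) := by
      rw [hgj]
      simp only [trigBasis_even]
      have hcos : ∀ n : ℕ, 1 ≤ n → n ≤ 2 * s + 2 →
          Real.cos (2 * Real.pi * ((s : ℝ) + 1) * ((n : ℝ) / (2 * s + 2 : ℕ)))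
            = (-1 : ℝ) ^ n := by
        intro n _ _
        have harg : 2 * Real.pi * ((s : ℝ) + 1) * ((n : ℝ) / ((2 * s + 2 : ℕ) : ℝ))
            = (n : ℝ) * Real.pi - 0 := by
          have : ((2 * s + 2 : ℕ) : ℝ) = 2 * ((s : ℝ) + 1) := by push_cast; ring
          rw [this]
          have hs0 : (s : ℝ) + 1 ≠ 0 := by positivity
          field_simp
          ring
        rw [harg, Real.cos_nat_mul_pi_sub]
        simp
      rw [hcos l hl1 hlp, hcos m hm1 hmp]
      linear_combination ((-1 : ℝ) ^ l * (-1 : ℝ) ^ m) * h2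
    -- evens sum: split off last term
    rw [Finset.sum_range_succ (fun k => g (2 * k + 2)) s]
    -- combine the two range-s sums via hpair
    have hcomb : (∑ k ∈ Finset.range s, g (2 * k + 2)) + ∑ k ∈ Finset.range s, g (2 * k + 3)
        = ∑ k ∈ Finset.range s, 2 * f (k + 1) := by
      rw [← Finset.sum_add_distrib]
      exact Finset.sum_congr rfl (fun k _ => hpair k)
    have hms := Finset.mul_sum (Finset.range s) (fun k => f (k + 1)) (2:ℝ)
    -- decompose the full cosine sum
    have hFdec : ∑ k ∈ Finset.range (2 * s + 2), f k
        = 1 + 2 * (∑ k ∈ Finset.range s, f (k + 1)) + f (s + 1) := by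
      rw [show 2 * s + 2 = (s + 1) + (s + 1) from by ring, sum_range_add' f (s + 1) (s + 1)]
      have hA : ∑ k ∈ Finset.range (s + 1), f k = f 0 + ∑ k ∈ Finset.range s, f (k + 1) := by
        rw [Finset.sum_range_succ' f s]; ring
      have hB : ∑ k ∈ Finset.range (s + 1), f (s + 1 + k)
          = ∑ k ∈ Finset.range (s + 1), f (k + 1) := by
        have := hshift (s + 1) (Or.inr (by omega))
        rw [show (2 * s + 2) - (s + 1) = s + 1 from by omega] at this
        exact this
      rw [hA, hB, Finset.sum_range_succ (fun k => f (k + 1)) s, hf0]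
      ring
    have hfs1 : f (s + 1) = (-1 : ℝ) ^ l * (-1 : ℝ) ^ m := by
      rw [hfk]
      have harg : ((s + 1 : ℕ) : ℝ) * θ = (l : ℝ) * Real.pi - (m : ℝ) * Real.pi := by
        rw [hθ]
        have : ((2 * s + 2 : ℕ) : ℝ) = 2 * ((s : ℝ) + 1) := by push_cast; ring
        rw [this]
        have hs0 : (s : ℝ) + 1 ≠ 0 := by positivity
        push_cast
        field_simp
      rw [harg, Real.cos_nat_mul_pi_sub, show (m : ℝ) * Real.pi = (m : ℝ) * Real.pi - 0 by ring,
        Real.cos_nat_mul_pi_sub]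
      simp
    rw [hF] at hFdec
    rw [hg1, hlast]
    -- goal: 1 + (Σ evens_s + 2*(-1)^l(-1)^m + Σ odds_s) = (if..) + (-1)^l*(-1)^m
    have := hcomb
    rw [hfs1] at hFdec
    by_cases hlm : l = m
    · rw [if_pos hlm] at hFdec ⊢
      linarith [hcomb, hFdec, hms]
    · rw [if_neg hlm] at hFdec ⊢
      linarith [hcomb, hFdec, hms]
  · -- p odd, p = 2q + 1
    have hq2 : p = 2 * q + 1 := by omega
    subst hq2
    have hq1 : 1 ≤ q := by omega
    rw [if_neg (by omega : ¬ (2 * q + 1) % 2 = 0)]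
    rw [show (2 * q + 1) / 2 = q from by omega,
      show (2 * q + 1 - 1) / 2 = q from by omega]
    have hcomb : (∑ k ∈ Finset.range q, g (2 * k + 2)) + ∑ k ∈ Finset.range q, g (2 * k + 3)
        = ∑ k ∈ Finset.range q, 2 * f (k + 1) := by
      rw [← Finset.sum_add_distrib]
      exact Finset.sum_congr rfl (fun k _ => hpair k)
    have hms := Finset.mul_sum (Finset.range q) (fun k => f (k + 1)) (2:ℝ)
    have hFdec : ∑ k ∈ Finset.range (2 * q + 1), f k
        = 1 + 2 * (∑ k ∈ Finset.range q, f (k + 1)) := by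
      rw [show 2 * q + 1 = (q + 1) + q from by ring, sum_range_add' f (q + 1) q]
      have hA : ∑ k ∈ Finset.range (q + 1), f k = f 0 + ∑ k ∈ Finset.range q, f (k + 1) := by
        rw [Finset.sum_range_succ' f q]; ring
      have hB : ∑ k ∈ Finset.range q, f (q + 1 + k)
          = ∑ k ∈ Finset.range q, f (k + 1) := by
        have := hshift q (Or.inl (by omega))
        rw [show (2 * q + 1) - q = q + 1 from by omega] at this
        exact this
      rw [hA, hB, hf0]
      ring
    rw [hF] at hFdec
    rw [hg1]
    by_cases hlm : l = m
    · rw [if_pos hlm] at hFdec ⊢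
      linarith [hcomb, hFdec, hms]
    · rw [if_neg hlm] at hFdec ⊢
      linarith [hcomb, hFdec, hms]

/-- for any `p ≥ 2`, `r > 0` and `S` in the Sobolev ball `W²_r`
(twice continuously differentiable, 1-periodic, `‖S‖² + ‖S'‖² + ‖S''‖² ≤ r`), the
correction coefficients `h_{j,p} = Σ_{l=1}^p ∫_{t_{l-1}}^{t_l} φ_j(t_l)(S(t) − S(t_l)) dt`
satisfy `Σ_{j=1}^p h_{j,p}² ≤ 3 r p⁻²`. -/
theorem stmt5 (p : ℕ) (hp : 2 ≤ p) (r : ℝ) (hr : 0 < r)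
    (S S' S'' : ℝ → ℝ)
    (hper : Function.Periodic S 1)
    (hderiv : ∀ x, HasDerivAt S (S' x) x)
    (hderiv' : ∀ x, HasDerivAt S' (S'' x) x)
    (hS''cont : Continuous S'')
    (hball : (∫ t in (0:ℝ)..1, S t ^ 2) + (∫ t in (0:ℝ)..1, S' t ^ 2)
        + (∫ t in (0:ℝ)..1, S'' t ^ 2) ≤ r) :
    ∑ j ∈ Finset.Icc 1 p,
        (∑ l ∈ Finset.Icc 1 p,
          ∫ t in (((l:ℝ) - 1)/p)..((l:ℝ)/p), trigBasis j ((l:ℝ)/p) * (S t - S ((l:ℝ)/p))) ^ 2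
      ≤ 3 * r / (p:ℝ) ^ 2 := by
  have hp1 : 0 < p := by omega
  have hpR : (0:ℝ) < p := by exact_mod_cast hp1
  have hp0 : (p:ℝ) ≠ 0 := ne_of_gt hpR
  have hScont : Continuous S :=
    continuous_iff_continuousAt.mpr (fun x => (hderiv x).continuousAt)
  have hS'cont : Continuous S' :=
    continuous_iff_continuousAt.mpr (fun x => (hderiv' x).continuousAt)
  -- the correction integrals
  obtain ⟨a, ha⟩ : ∃ a : ℕ → ℝ, ∀ l : ℕ,
      a l = ∫ t in (((l:ℝ) - 1)/p)..((l:ℝ)/p), (S t - S ((l:ℝ)/p)) :=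
    ⟨_, fun _ => rfl⟩
  -- rewrite the goal integrals
  have hrw : ∀ j l : ℕ,
      (∫ t in (((l:ℝ) - 1)/p)..((l:ℝ)/p), trigBasis j ((l:ℝ)/p) * (S t - S ((l:ℝ)/p)))
        = trigBasis j ((l:ℝ)/p) * a l := by
    intro j l
    rw [ha l]
    exact intervalIntegral.integral_const_mul _ _
  simp only [hrw]
  -- expand the square of sums
  have hexp : ∑ j ∈ Finset.Icc 1 p, (∑ l ∈ Finset.Icc 1 p, trigBasis j ((l:ℝ)/p) * a l) ^ 2
      = ∑ l ∈ Finset.Icc 1 p, ∑ m ∈ Finset.Icc 1 p,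
          (∑ j ∈ Finset.Icc 1 p, trigBasis j ((l:ℝ)/p) * trigBasis j ((m:ℝ)/p))
            * (a l * a m) := by
    calc ∑ j ∈ Finset.Icc 1 p, (∑ l ∈ Finset.Icc 1 p, trigBasis j ((l:ℝ)/p) * a l) ^ 2
        = ∑ j ∈ Finset.Icc 1 p, ∑ l ∈ Finset.Icc 1 p, ∑ m ∈ Finset.Icc 1 p,
            (trigBasis j ((l:ℝ)/p) * a l) * (trigBasis j ((m:ℝ)/p) * a m) := by
          apply Finset.sum_congr rfl
          intro j _
          rw [sq, Finset.sum_mul_sum]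
      _ = ∑ l ∈ Finset.Icc 1 p, ∑ j ∈ Finset.Icc 1 p, ∑ m ∈ Finset.Icc 1 p,
            (trigBasis j ((l:ℝ)/p) * a l) * (trigBasis j ((m:ℝ)/p) * a m) := Finset.sum_comm
      _ = ∑ l ∈ Finset.Icc 1 p, ∑ m ∈ Finset.Icc 1 p, ∑ j ∈ Finset.Icc 1 p,
            (trigBasis j ((l:ℝ)/p) * a l) * (trigBasis j ((m:ℝ)/p) * a m) := by
          exact Finset.sum_congr rfl (fun l _ => Finset.sum_comm)
      _ = ∑ l ∈ Finset.Icc 1 p, ∑ m ∈ Finset.Icc 1 p,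
            (∑ j ∈ Finset.Icc 1 p, trigBasis j ((l:ℝ)/p) * trigBasis j ((m:ℝ)/p))
              * (a l * a m) := by
          apply Finset.sum_congr rfl; intro l _
          apply Finset.sum_congr rfl; intro m _
          rw [Finset.sum_mul]
          exact Finset.sum_congr rfl (fun j _ => mul_mul_mul_comm _ _ _ _)
  rw [hexp]
  -- apply orthogonality
  have horth : ∑ l ∈ Finset.Icc 1 p, ∑ m ∈ Finset.Icc 1 p,
      (∑ j ∈ Finset.Icc 1 p, trigBasis j ((l:ℝ)/p) * trigBasis j ((m:ℝ)/p)) * (a l * a m)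
      = (∑ l ∈ Finset.Icc 1 p, (p:ℝ) * (a l) ^ 2)
        + (if p % 2 = 0 then (∑ l ∈ Finset.Icc 1 p, (-1:ℝ) ^ l * a l) ^ 2 else 0) := by
    have hstep : ∀ l ∈ Finset.Icc 1 p, ∀ m ∈ Finset.Icc 1 p,
        (∑ j ∈ Finset.Icc 1 p, trigBasis j ((l:ℝ)/p) * trigBasis j ((m:ℝ)/p)) * (a l * a m)
          = (if l = m then (p:ℝ) * (a l * a m) else 0)
            + (if p % 2 = 0 then ((-1:ℝ) ^ l * a l) * ((-1:ℝ) ^ m * a m) else 0) := by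
      intro l hl m hm
      rw [Finset.mem_Icc] at hl hm
      rw [orth p l m hp hl.1 hl.2 hm.1 hm.2]
      by_cases hpar : p % 2 = 0 <;> by_cases hlm : l = m <;>
        simp [hpar, hlm] <;> ring
    rw [Finset.sum_congr rfl (fun l hl => Finset.sum_congr rfl (fun m hm => hstep l hl m hm))]
    rw [Finset.sum_congr rfl (fun l (hl : l ∈ Finset.Icc 1 p) => Finset.sum_add_distrib),
      Finset.sum_add_distrib]
    congr 1
    · apply Finset.sum_congr rfl
      intro l hl
      rw [Finset.sum_ite_eq (Finset.Icc 1 p) l (fun m => (p:ℝ) * (a l * a m)), if_pos hl]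
      ring
    · by_cases hpar : p % 2 = 0
      · simp only [if_pos hpar]
        rw [sq, Finset.sum_mul_sum]
      · simp only [if_neg hpar, Finset.sum_const_zero]
  rw [horth]
  -- Cauchy-Schwarz for the alternating sum
  have hcs : (∑ l ∈ Finset.Icc 1 p, (-1:ℝ) ^ l * a l) ^ 2
      ≤ (p:ℝ) * ∑ l ∈ Finset.Icc 1 p, (a l) ^ 2 := by
    have := Finset.sum_mul_sq_le_sq_mul_sq (Finset.Icc 1 p)
      (fun l => (-1:ℝ) ^ l) (fun l => a l)
    have hone : ∑ l ∈ Finset.Icc 1 p, ((-1:ℝ) ^ l) ^ 2 = (p:ℝ) := by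
      have : ∀ l ∈ Finset.Icc 1 p, ((-1:ℝ) ^ l) ^ 2 = 1 := by
        intro l _
        rw [← pow_mul, mul_comm, pow_mul]
        norm_num
      rw [Finset.sum_congr rfl this, Finset.sum_const, Nat.card_Icc]
      simp
    calc (∑ l ∈ Finset.Icc 1 p, (-1:ℝ) ^ l * a l) ^ 2
        ≤ (∑ l ∈ Finset.Icc 1 p, ((-1:ℝ) ^ l) ^ 2) * ∑ l ∈ Finset.Icc 1 p, (a l) ^ 2 := this
      _ = (p:ℝ) * ∑ l ∈ Finset.Icc 1 p, (a l) ^ 2 := by rw [hone]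
  -- per-interval bound on a l
  have haI : ∀ l : ℕ, (a l) ^ 2
      ≤ (1/(p:ℝ)) ^ 3 * ∫ t in (((l:ℝ) - 1)/p)..((l:ℝ)/p), (S' t) ^ 2 := by
    intro l
    obtain ⟨u, hu⟩ : ∃ u : ℝ, u = ((l:ℝ) - 1)/p := ⟨_, rfl⟩
    obtain ⟨v, hv⟩ : ∃ v : ℝ, v = (l:ℝ)/p := ⟨_, rfl⟩
    have hvu : v - u = 1/(p:ℝ) := by rw [hu, hv]; field_simp; ring
    have huv : u ≤ v := by
      have : (0:ℝ) < 1/(p:ℝ) := by positivity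
      linarith
    have hsq : Continuous fun t => (S t - S v) ^ 2 := by
      apply Continuous.pow
      exact hScont.sub continuous_const
    have hS'sq : Continuous fun t => (S' t) ^ 2 := hS'cont.pow 2
    have hInonneg : (0:ℝ) ≤ ∫ t in u..v, (S' t) ^ 2 :=
      intervalIntegral.integral_nonneg huv (fun t _ => sq_nonneg _)
    -- pointwise increment bound
    have hpt : ∀ t ∈ Set.Icc u v, (S t - S v) ^ 2 ≤ (1/(p:ℝ)) * ∫ s in u..v, (S' s) ^ 2 := by
      intro t ht
      obtain ⟨htu, htv⟩ := ht
      have hftc : ∫ s in t..v, S' s = S v - S t :=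
        intervalIntegral.integral_eq_sub_of_hasDerivAt (fun x _ => hderiv x)
          (hS'cont.intervalIntegrable t v)
      have h1 : (S t - S v) ^ 2 = (∫ s in t..v, S' s) ^ 2 := by rw [hftc]; ring
      have h2 : (∫ s in t..v, S' s) ^ 2 ≤ (v - t) * ∫ s in t..v, (S' s) ^ 2 :=
        cs_int S' hS'cont t v htv
      have h3 : ∫ s in t..v, (S' s) ^ 2 ≤ ∫ s in u..v, (S' s) ^ 2 := by
        have hadd : (∫ s in u..t, (S' s) ^ 2) + ∫ s in t..v, (S' s) ^ 2
            = ∫ s in u..v, (S' s) ^ 2 :=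
          intervalIntegral.integral_add_adjacent_intervals
            (hS'sq.intervalIntegrable u t) (hS'sq.intervalIntegrable t v)
        have hpos : (0:ℝ) ≤ ∫ s in u..t, (S' s) ^ 2 :=
          intervalIntegral.integral_nonneg htu (fun s _ => sq_nonneg _)
        linarith
      have h4 : (0:ℝ) ≤ ∫ s in t..v, (S' s) ^ 2 :=
        intervalIntegral.integral_nonneg htv (fun s _ => sq_nonneg _)
      have h5 : v - t ≤ 1/(p:ℝ) := by linarith
      calc (S t - S v) ^ 2 = (∫ s in t..v, S' s) ^ 2 := h1
        _ ≤ (v - t) * ∫ s in t..v, (S' s) ^ 2 := h2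
        _ ≤ (1/(p:ℝ)) * ∫ s in u..v, (S' s) ^ 2 := by
            apply mul_le_mul h5 h3 h4
            positivity
    -- integrate the pointwise bound
    have hstep3 : ∫ t in u..v, (S t - S v) ^ 2
        ≤ (1/(p:ℝ)) * ((1/(p:ℝ)) * ∫ s in u..v, (S' s) ^ 2) := by
      have hmono := intervalIntegral.integral_mono_on huv
        (hsq.intervalIntegrable u v) (intervalIntegrable_const (μ := volume)) hpt
      rw [intervalIntegral.integral_const, smul_eq_mul, hvu] at hmono
      exact hmono
    have hstep1 : (a l) ^ 2 ≤ (1/(p:ℝ)) * ∫ t in u..v, (S t - S v) ^ 2 := by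
      have := cs_int (fun t => S t - S v) (hScont.sub continuous_const) u v huv
      rw [ha l, ← hu, ← hv, hvu] at *
      exact this
    have hfinal : (a l) ^ 2 ≤ (1/(p:ℝ)) * ((1/(p:ℝ)) * ((1/(p:ℝ)) * ∫ s in u..v, (S' s) ^ 2)) := by
      calc (a l) ^ 2 ≤ (1/(p:ℝ)) * ∫ t in u..v, (S t - S v) ^ 2 := hstep1
        _ ≤ (1/(p:ℝ)) * ((1/(p:ℝ)) * ((1/(p:ℝ)) * ∫ s in u..v, (S' s) ^ 2)) := by
            apply mul_le_mul_of_nonneg_left _ (by positivity)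
            calc ∫ t in u..v, (S t - S v) ^ 2
                ≤ (1/(p:ℝ)) * ((1/(p:ℝ)) * ∫ s in u..v, (S' s) ^ 2) := hstep3
              _ = (1/(p:ℝ)) * ((1/(p:ℝ)) * ∫ s in u..v, (S' s) ^ 2) := rfl
    rw [hu, hv] at hfinal
    calc (a l) ^ 2 ≤ (1/(p:ℝ)) * ((1/(p:ℝ)) * ((1/(p:ℝ))
          * ∫ s in (((l:ℝ) - 1)/p)..((l:ℝ)/p), (S' s) ^ 2)) := hfinal
      _ = (1/(p:ℝ)) ^ 3 * ∫ t in (((l:ℝ) - 1)/p)..((l:ℝ)/p), (S' t) ^ 2 := by ring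
  -- summing the interval integrals gives the full integral
  have hS'sq : Continuous fun t => (S' t) ^ 2 := hS'cont.pow 2
  have hsumI : ∑ l ∈ Finset.Icc 1 p, (∫ t in (((l:ℝ) - 1)/p)..((l:ℝ)/p), (S' t) ^ 2)
      = ∫ t in (0:ℝ)..1, (S' t) ^ 2 := by
    rw [sum_Icc_one_eq_range (fun l => ∫ t in (((l:ℝ) - 1)/p)..((l:ℝ)/p), (S' t) ^ 2) p]
    have hmatch : ∀ k ∈ Finset.range p,
        (∫ t in ((((k + 1 : ℕ):ℝ) - 1)/p)..(((k + 1 : ℕ):ℝ)/p), (S' t) ^ 2)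
          = ∫ t in (((k:ℕ):ℝ)/p)..((((k+1):ℕ):ℝ)/p), (S' t) ^ 2 := by
      intro k _
      congr 1 <;> push_cast <;> ring
    rw [Finset.sum_congr rfl hmatch]
    have := intervalIntegral.sum_integral_adjacent_intervals
      (μ := volume) (a := fun k : ℕ => ((k:ℕ):ℝ)/p) (n := p)
      (fun k _ => hS'sq.intervalIntegrable _ _)
    rw [this]
    norm_num
    rw [div_self hp0]
  -- the derivative term is at most r
  have hrS' : ∫ t in (0:ℝ)..1, (S' t) ^ 2 ≤ r := by
    have h1 : (0:ℝ) ≤ ∫ t in (0:ℝ)..1, S t ^ 2 :=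
      intervalIntegral.integral_nonneg zero_le_one (fun t _ => sq_nonneg _)
    have h2 : (0:ℝ) ≤ ∫ t in (0:ℝ)..1, S'' t ^ 2 :=
      intervalIntegral.integral_nonneg zero_le_one (fun t _ => sq_nonneg _)
    linarith
  -- total bound on the sum of squares
  have hsuma : ∑ l ∈ Finset.Icc 1 p, (a l) ^ 2 ≤ r / (p:ℝ) ^ 3 := by
    calc ∑ l ∈ Finset.Icc 1 p, (a l) ^ 2
        ≤ ∑ l ∈ Finset.Icc 1 p,
            (1/(p:ℝ)) ^ 3 * ∫ t in (((l:ℝ) - 1)/p)..((l:ℝ)/p), (S' t) ^ 2 :=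
          Finset.sum_le_sum (fun l _ => haI l)
      _ = (1/(p:ℝ)) ^ 3 * ∑ l ∈ Finset.Icc 1 p,
            ∫ t in (((l:ℝ) - 1)/p)..((l:ℝ)/p), (S' t) ^ 2 := by rw [Finset.mul_sum]
      _ = (1/(p:ℝ)) ^ 3 * ∫ t in (0:ℝ)..1, (S' t) ^ 2 := by rw [hsumI]
      _ ≤ (1/(p:ℝ)) ^ 3 * r := by
          apply mul_le_mul_of_nonneg_left hrS' (by positivity)
      _ = r / (p:ℝ) ^ 3 := by field_simp
  have hfirst : ∑ l ∈ Finset.Icc 1 p, (p:ℝ) * (a l) ^ 2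
      = (p:ℝ) * ∑ l ∈ Finset.Icc 1 p, (a l) ^ 2 := by rw [Finset.mul_sum]
  have hanonneg : (0:ℝ) ≤ ∑ l ∈ Finset.Icc 1 p, (a l) ^ 2 :=
    Finset.sum_nonneg (fun l _ => sq_nonneg _)
  have hbound : (∑ l ∈ Finset.Icc 1 p, (p:ℝ) * (a l) ^ 2)
      + (if p % 2 = 0 then (∑ l ∈ Finset.Icc 1 p, (-1:ℝ) ^ l * a l) ^ 2 else 0)
      ≤ 2 * (p:ℝ) * ∑ l ∈ Finset.Icc 1 p, (a l) ^ 2 := by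
    rw [hfirst]
    by_cases hpar : p % 2 = 0
    · rw [if_pos hpar]; linarith
    · rw [if_neg hpar]; nlinarith
  calc (∑ l ∈ Finset.Icc 1 p, (p:ℝ) * (a l) ^ 2)
      + (if p % 2 = 0 then (∑ l ∈ Finset.Icc 1 p, (-1:ℝ) ^ l * a l) ^ 2 else 0)
      ≤ 2 * (p:ℝ) * ∑ l ∈ Finset.Icc 1 p, (a l) ^ 2 := hbound
    _ ≤ 2 * (p:ℝ) * (r / (p:ℝ) ^ 3) := by
        apply mul_le_mul_of_nonneg_left hsuma (by positivity)
    _ = 2 * r / (p:ℝ) ^ 2 := by field_simp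
    _ ≤ 3 * r / (p:ℝ) ^ 2 := by
        gcongr
        linarith
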